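/- Let K, φ, α > 0. For each Q̄ > 0 let y*(Q̄) be the unique positive root of 2y³ + 3y² = (φ + αQ̄)Q̄²/K, and set ξ = y*(Q̄)/Q̄. If 3Kξ² − φ > 0, then Q̄ = (3Kξ² − φ)/(α − 2Kξ³), and consequently ξ, and therefore OPT = 3Kξ² − φ, is a strictly monotonically increasing function of Q̄. -/

import Mathlib

lemma stmt10_key (K φ α Q y : ℝ) (hK : 0 < K) (hQ : 0 < Q)
    (h : 2 * y ^ 3 + 3 * y ^ 2 = (φ + α * Q) * Q ^ 2 / K) :
    Q * (α - 2 * K * (y / Q) ^ 3) = 3 * K * (y / Q) ^ 2 - φ := by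
  have hK' : K ≠ 0 := ne_of_gt hK
  have hQ' : Q ≠ 0 := ne_of_gt hQ
  field_simp at h ⊢
  linear_combination (-1) * h

theorem stmt10 (K φ α : ℝ) (hK : 0 < K) (hφ : 0 < φ) (hα : 0 < α) :
    (∀ Q y : ℝ, 0 < Q → 0 < y → 2 * y ^ 3 + 3 * y ^ 2 = (φ + α * Q) * Q ^ 2 / K →
      0 < 3 * K * (y / Q) ^ 2 - φ →
      Q = (3 * K * (y / Q) ^ 2 - φ) / (α - 2 * K * (y / Q) ^ 3)) ∧
    (∀ Q₁ Q₂ y₁ y₂ : ℝ, 0 < Q₁ → 0 < Q₂ → 0 < y₁ → 0 < y₂ →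
      2 * y₁ ^ 3 + 3 * y₁ ^ 2 = (φ + α * Q₁) * Q₁ ^ 2 / K →
      2 * y₂ ^ 3 + 3 * y₂ ^ 2 = (φ + α * Q₂) * Q₂ ^ 2 / K →
      0 < 3 * K * (y₁ / Q₁) ^ 2 - φ → 0 < 3 * K * (y₂ / Q₂) ^ 2 - φ →
      Q₁ < Q₂ →
      y₁ / Q₁ < y₂ / Q₂ ∧ 3 * K * (y₁ / Q₁) ^ 2 - φ < 3 * K * (y₂ / Q₂) ^ 2 - φ) := by
  constructor
  · intro Q y hQ hy h hpos
    have key := stmt10_key K φ α Q y hK hQ h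
    have hD : 0 < α - 2 * K * (y / Q) ^ 3 := by
      by_contra hc
      push_neg at hc
      nlinarith
    rw [eq_div_iff (ne_of_gt hD)]
    linarith [key]
  · intro Q₁ Q₂ y₁ y₂ hQ₁ hQ₂ hy₁ hy₂ h₁ h₂ hp₁ hp₂ hQlt
    have k₁ := stmt10_key K φ α Q₁ y₁ hK hQ₁ h₁
    have k₂ := stmt10_key K φ α Q₂ y₂ hK hQ₂ h₂
    have hD₁ : 0 < α - 2 * K * (y₁ / Q₁) ^ 3 := by
      by_contra hc; push_neg at hc; nlinarith
    have hD₂ : 0 < α - 2 * K * (y₂ / Q₂) ^ 3 := by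
      by_contra hc; push_neg at hc; nlinarith
    have hx₁ : 0 < y₁ / Q₁ := div_pos hy₁ hQ₁
    have hx₂ : 0 < y₂ / Q₂ := div_pos hy₂ hQ₂
    have hxi : y₁ / Q₁ < y₂ / Q₂ := by
      by_contra hc
      push_neg at hc
      set a := y₁ / Q₁
      set b := y₂ / Q₂
      have hsq : b ^ 2 ≤ a ^ 2 := by nlinarith
      have hcube : b ^ 3 ≤ a ^ 3 := by nlinarith
      have hN : 3 * K * b ^ 2 - φ ≤ 3 * K * a ^ 2 - φ := by nlinarith
      have hDle : α - 2 * K * a ^ 3 ≤ α - 2 * K * b ^ 3 := by nlinarith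
      have h1 : Q₂ * (α - 2 * K * a ^ 3) ≤ Q₂ * (α - 2 * K * b ^ 3) :=
        mul_le_mul_of_nonneg_left hDle hQ₂.le
      have h2 : Q₂ * (α - 2 * K * a ^ 3) ≤ Q₁ * (α - 2 * K * a ^ 3) := by
        linarith
      have h3 : Q₂ ≤ Q₁ := le_of_mul_le_mul_right
        (by linarith [h2] : Q₂ * (α - 2 * K * a ^ 3) ≤ Q₁ * (α - 2 * K * a ^ 3)) hD₁
      linarith
    refine ⟨hxi, ?_⟩
    have hsq : (y₁ / Q₁) ^ 2 < (y₂ / Q₂) ^ 2 :=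
      pow_lt_pow_left₀ hxi hx₁.le (by norm_num)
    have h3K : (0:ℝ) < 3 * K := by linarith
    linarith [mul_lt_mul_of_pos_left hsq h3K]
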